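/- Let ħ > 0 and let Σ be a real symmetric 2n×2n matrix (the covariance matrix), with entries indexed so that Σ_{j,j} = (Δxⱼ)², Σ_{n+j,n+j} = (Δpⱼ)², and Σ_{j,n+j} = Cov(xⱼ,pⱼ) for 1 ≤ j ≤ n. If the complex 2n×2n matrix Σ + (iħ/2)J is positive semidefinite (as a Hermitian matrix), then the Robertson–Schrödinger inequalities hold: for every j with 1 ≤ j ≤ n, (Δxⱼ)²(Δpⱼ)² ≥ Cov(xⱼ,pⱼ)² + ħ²/4. -/

import Mathlib

open Matrix
open scoped ComplexOrder

noncomputable section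

/-- The standard symplectic matrix `J = ((0, I), (-I, 0))`. -/
def stdJ (n : ℕ) : Matrix (Fin n ⊕ Fin n) (Fin n ⊕ Fin n) ℝ :=
  Matrix.fromBlocks 0 1 (-1) 0

/-- If the Hermitian matrix `Σ + (iħ/2)J` is positive semidefinite, then the
Robertson–Schrödinger inequalities hold:
`(Δxⱼ)²(Δpⱼ)² ≥ Cov(xⱼ,pⱼ)² + ħ²/4` for all `j`, where `(Δxⱼ)² = Σ_{j,j}`,
`(Δpⱼ)² = Σ_{n+j,n+j}` and `Cov(xⱼ,pⱼ) = Σ_{j,n+j}`. -/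
theorem robertson_schrodinger {n : ℕ} (hn : 1 ≤ n) (hb : ℝ) (hhb : 0 < hb)
    (Scov : Matrix (Fin n ⊕ Fin n) (Fin n ⊕ Fin n) ℝ) (hsymm : Scov.IsSymm)
    (hpos : (Scov.map Complex.ofReal +
        (((hb / 2 : ℝ) : ℂ) * Complex.I) • (stdJ n).map Complex.ofReal).PosSemidef) :
    ∀ j : Fin n,
      Scov (Sum.inl j) (Sum.inr j) ^ 2 + hb ^ 2 / 4 ≤
        Scov (Sum.inl j) (Sum.inl j) * Scov (Sum.inr j) (Sum.inr j) := by
  intro j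
  set M := (Scov.map Complex.ofReal +
        (((hb / 2 : ℝ) : ℂ) * Complex.I) • (stdJ n).map Complex.ofReal) with hM
  set a := Scov (Sum.inl j) (Sum.inl j)
  set b := Scov (Sum.inr j) (Sum.inr j)
  set c := Scov (Sum.inl j) (Sum.inr j)
  have hc' : Scov (Sum.inr j) (Sum.inl j) = c := by
    have := congrFun (congrFun hsymm (Sum.inr j)) (Sum.inl j)
    simpa [Matrix.transpose_apply] using this.symm
  set z : ℂ := (c : ℂ) + ((hb/2 : ℝ) : ℂ) * Complex.I with hz
  have key : ∀ x y : ℂ,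
      0 ≤ (a:ℂ) * (starRingEnd ℂ x * x) + z * (starRingEnd ℂ x * y)
        + starRingEnd ℂ z * (starRingEnd ℂ y * x) + (b:ℂ) * (starRingEnd ℂ y * y) := by
    intro x y
    have h := hpos.dotProduct_mulVec_nonneg (Pi.single (Sum.inl j) x + Pi.single (Sum.inr j) y)
    have e : star (Pi.single (Sum.inl j) x + Pi.single (Sum.inr j) y) ⬝ᵥ
        (M *ᵥ (Pi.single (Sum.inl j) x + Pi.single (Sum.inr j) y))
        = (a:ℂ) * (starRingEnd ℂ x * x) + z * (starRingEnd ℂ x * y)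
        + starRingEnd ℂ z * (starRingEnd ℂ y * x) + (b:ℂ) * (starRingEnd ℂ y * y) := by
      rw [star_add, Matrix.mulVec_add, Matrix.mulVec_single, Matrix.mulVec_single,
        ← Pi.single_star, ← Pi.single_star, add_dotProduct, single_dotProduct,
        single_dotProduct]
      simp only [Pi.add_apply, hM, Matrix.add_apply, Matrix.smul_apply, Matrix.map_apply,
        stdJ, Matrix.fromBlocks_apply₁₁, Matrix.fromBlocks_apply₁₂, Matrix.fromBlocks_apply₂₁,
        Matrix.fromBlocks_apply₂₂, Matrix.one_apply_eq, Matrix.zero_apply, Pi.neg_apply,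
        Matrix.one_apply, if_pos rfl, hc', hz, smul_eq_mul]
      push_cast
      simp [Complex.conj_ofReal, _root_.map_add, _root_.map_mul, Complex.conj_I, map_ofNat]
      simp only [hc', a, b, c]
      ring
    rw [e] at h
    exact h
  set w : ℝ := c^2 + (hb/2)^2 with hw
  have hwpos : 0 < w := by positivity
  have key2 : ∀ t : ℝ, 0 ≤ (a*w) * (t*t) + (-2*w) * t + b := by
    intro t
    have h := key ((t:ℂ) * z) (-1)
    have e : (a:ℂ) * (starRingEnd ℂ ((t:ℂ)*z) * ((t:ℂ)*z)) + z * (starRingEnd ℂ ((t:ℂ)*z) * (-1))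
        + starRingEnd ℂ z * (starRingEnd ℂ (-1) * ((t:ℂ)*z)) + (b:ℂ) * (starRingEnd ℂ (-1) * (-1))
        = (((a*w) * (t*t) + (-2*w) * t + b : ℝ) : ℂ) := by
      simp only [hz, hw, _root_.map_mul, _root_.map_add, map_neg, _root_.map_one,
        Complex.conj_ofReal, Complex.conj_I]
      push_cast
      ring_nf
      simp only [Complex.I_sq]
      ring
    rw [e] at h
    exact Complex.zero_le_real.mp h
  have hd := discrim_le_zero key2
  rw [discrim] at hd
  have hab : w ≤ a * b := by nlinarith [hd, hwpos]
  have h4 : hb^2/4 = (hb/2)^2 := by ring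
  rw [hw] at hab
  linarith
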